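/- Let n > 3 be an integer and b̃ < 0. Then T̃ₙ(2, b̃) is invertible and the sign of the (i,j)-entry of T̃ₙ(2, b̃)⁻¹ is +1 if (i,j) ∈ {2,…,n−1}×{2,…,n−1} or (i,j) ∈ {(1,n),(n,1)}, and −1 otherwise. -/

import Mathlib

open Matrix BigOperators Finset

/-- The symmetric tridiagonal near-Toeplitz matrix with corner diagonal entries `bt`,
interior diagonal entries `b`, and off-diagonal entries `-1` (0-based indices). -/
noncomputable def Ttilde (n : ℕ) (b bt : ℝ) : Matrix (Fin n) (Fin n) ℝ :=
  Matrix.of fun i j =>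
    if (i : ℕ) = (j : ℕ) then (if (i : ℕ) = 0 ∨ (i : ℕ) = n - 1 then bt else b)
    else if (i : ℕ) + 1 = (j : ℕ) ∨ (j : ℕ) + 1 = (i : ℕ) then (-1 : ℝ) else 0

/-- The maximum absolute row sum (operator norm induced by the sup norm). -/
noncomputable def normInf {n : ℕ} (A : Matrix (Fin n) (Fin n) ℝ) : ℝ :=
  ⨆ i : Fin n, ∑ j : Fin n, |A i j|

noncomputable def uu (c : ℝ) (k : ℕ) : ℝ := 1 + c * k

noncomputable def vv (n : ℕ) (c : ℝ) (k : ℕ) : ℝ := 1 + c * ((n - 1 - k : ℕ) : ℝ)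

noncomputable def Bmat (n : ℕ) (c : ℝ) : Matrix (Fin n) (Fin n) ℝ :=
  Matrix.of fun i j =>
    uu c (min (i : ℕ) (j : ℕ)) * vv n c (max (i : ℕ) (j : ℕ))
      / (c * (2 + c * ((n : ℝ) - 1)))

lemma row_sum {n : ℕ} (b bt : ℝ) (i : Fin n) (g : Fin n → ℝ) :
    ∑ j, Ttilde n b bt i j * g j =
      (if (i : ℕ) = 0 ∨ (i : ℕ) = n - 1 then bt else b) * g i
        + (if h : 0 < (i : ℕ) then
            -g ⟨(i : ℕ) - 1, lt_of_le_of_lt (Nat.sub_le _ _) i.isLt⟩ else 0)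
        + (if h : (i : ℕ) + 1 < n then -g ⟨(i : ℕ) + 1, h⟩ else 0) := by
  have key : ∀ j : Fin n, Ttilde n b bt i j * g j =
      (if (i : ℕ) = (j : ℕ) then (if (i : ℕ) = 0 ∨ (i : ℕ) = n - 1 then bt else b) * g j else 0)
      + (if (j : ℕ) + 1 = (i : ℕ) then -g j else 0)
      + (if (i : ℕ) + 1 = (j : ℕ) then -g j else 0) := by
    intro j
    simp only [Ttilde, Matrix.of_apply]
    split_ifs <;> (try ring) <;> (exfalso; omega)
  rw [Finset.sum_congr rfl (fun j _ => key j), Finset.sum_add_distrib, Finset.sum_add_distrib]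
  congr 1
  · congr 1
    · have : ∀ j : Fin n, (if (i : ℕ) = (j : ℕ) then
          (if (i : ℕ) = 0 ∨ (i : ℕ) = n - 1 then bt else b) * g j else 0)
          = (if j = i then (if (i : ℕ) = 0 ∨ (i : ℕ) = n - 1 then bt else b) * g j else 0) := by
        intro j
        exact if_congr (by rw [Fin.ext_iff]; omega) rfl rfl
      rw [Finset.sum_congr rfl (fun j _ => this j), Finset.sum_ite_eq' Finset.univ i]
      simp
    · by_cases h : 0 < (i : ℕ)
      · rw [dif_pos h]
        set p : Fin n := ⟨(i : ℕ) - 1, lt_of_le_of_lt (Nat.sub_le _ _) i.isLt⟩ with hp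
        have : ∀ j : Fin n, (if (j : ℕ) + 1 = (i : ℕ) then -g j else 0)
            = (if j = p then -g j else 0) := by
          intro j
          refine if_congr ?_ rfl rfl
          rw [Fin.ext_iff, hp]
          simp only [Fin.val_mk]
          omega
        rw [Finset.sum_congr rfl (fun j _ => this j), Finset.sum_ite_eq' Finset.univ p]
        simp
      · rw [dif_neg h]
        apply Finset.sum_eq_zero
        intro j _
        rw [if_neg (by omega)]
  · by_cases h : (i : ℕ) + 1 < n
    · rw [dif_pos h]
      set p : Fin n := ⟨(i : ℕ) + 1, h⟩ with hp
      have : ∀ j : Fin n, (if (i : ℕ) + 1 = (j : ℕ) then -g j else 0)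
          = (if j = p then -g j else 0) := by
        intro j
        refine if_congr ?_ rfl rfl
        rw [Fin.ext_iff, hp]
        simp only [Fin.val_mk]
        omega
      rw [Finset.sum_congr rfl (fun j _ => this j), Finset.sum_ite_eq' Finset.univ p]
      simp
    · rw [dif_neg h]
      apply Finset.sum_eq_zero
      intro j _
      rw [if_neg (by omega)]

lemma cast_sub' {a b : ℕ} (h : b ≤ a) : ((a - b : ℕ) : ℝ) = (a : ℝ) - (b : ℝ) :=
  Nat.cast_sub h

lemma vv_eq {n : ℕ} (c : ℝ) {X : ℕ} (hX : X ≤ n - 1) (hn : 1 ≤ n) :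
    vv n c X = 1 + c * ((n : ℝ) - 1 - (X : ℝ)) := by
  unfold vv
  rw [show (n - 1 - X : ℕ) = n - (1 + X) from by omega, cast_sub' (by omega)]
  push_cast
  ring

lemma theta_pos {n : ℕ} (hn : 3 < n) {bt : ℝ} (hbt : bt < 0) :
    0 < (bt - 1) * (2 + (bt - 1) * ((n : ℝ) - 1)) := by
  set c := bt - 1 with hc
  have hc1 : c < -1 := by rw [hc]; linarith
  have hn4 : (4 : ℝ) ≤ (n : ℝ) := by exact_mod_cast hn
  nlinarith [mul_nonneg (sq_nonneg c) (by linarith : (0:ℝ) ≤ (n : ℝ) - 1 - 3),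
    mul_pos (by linarith : (0:ℝ) < -c) (by linarith : (0:ℝ) < -(3*c+2))]

lemma Tt_mul_eq_one {n : ℕ} (hn : 3 < n) {bt : ℝ} (hbt : bt < 0) :
    Ttilde n 2 bt * Bmat n (bt - 1) = 1 := by
  set c := bt - 1 with hc
  have hθ : (0:ℝ) < c * (2 + c * ((n : ℝ) - 1)) := theta_pos hn hbt
  have hθ' : c * (2 + c * ((n : ℝ) - 1)) ≠ 0 := ne_of_gt hθ
  have hc0 : c ≠ 0 := left_ne_zero_of_mul hθ'
  have h20 : 2 + c * ((n : ℝ) - 1) ≠ 0 := right_ne_zero_of_mul hθ'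
  ext i k
  rw [Matrix.mul_apply, row_sum 2 bt i (fun j => Bmat n c j k), Matrix.one_apply]
  have hkn : (k : ℕ) < n := k.isLt
  have hin : (i : ℕ) < n := i.isLt
  simp only [Bmat, Matrix.of_apply, Fin.val_mk]
  by_cases hi0 : (i : ℕ) = 0
  · rw [if_pos (Or.inl hi0), dif_neg (by omega), dif_pos (by omega : (i:ℕ) + 1 < n)]
    by_cases hk0 : (k : ℕ) = 0
    · rw [if_pos (by rw [Fin.ext_iff]; omega)]
      rw [show min (i:ℕ) (k:ℕ) = 0 from by omega, show max (i:ℕ) (k:ℕ) = 0 from by omega,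
        show min ((i:ℕ)+1) (k:ℕ) = 0 from by omega, show max ((i:ℕ)+1) (k:ℕ) = 1 from by omega]
      rw [vv_eq c (by omega) (by omega), vv_eq c (by omega) (by omega)]
      simp only [uu]
      push_cast
      field_simp
      ring
    · rw [if_neg (by rw [Fin.ext_iff]; omega)]
      rw [show min (i:ℕ) (k:ℕ) = 0 from by omega, show max (i:ℕ) (k:ℕ) = (k:ℕ) from by omega,
        show min ((i:ℕ)+1) (k:ℕ) = 1 from by omega, show max ((i:ℕ)+1) (k:ℕ) = (k:ℕ) from by omega]
      simp only [uu]
      push_cast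
      field_simp
      ring
  · by_cases hiN : (i : ℕ) = n - 1
    · rw [if_pos (Or.inr hiN), dif_pos (by omega), dif_neg (by omega)]
      by_cases hkN : (k : ℕ) = n - 1
      · rw [if_pos (by rw [Fin.ext_iff]; omega)]
        rw [show min (i:ℕ) (k:ℕ) = n - 1 from by omega, show max (i:ℕ) (k:ℕ) = n - 1 from by omega,
          show min ((i:ℕ)-1) (k:ℕ) = n - 2 from by omega,
          show max ((i:ℕ)-1) (k:ℕ) = n - 1 from by omega]
        rw [vv_eq c (le_refl _) (by omega)]
        simp only [uu]
        rw [show ((n - 1 : ℕ) : ℝ) = (n:ℝ) - 1 from by rw [cast_sub' (by omega)]; norm_num,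
          show ((n - 2 : ℕ) : ℝ) = (n:ℝ) - 2 from by rw [cast_sub' (by omega)]; norm_num]
        field_simp
        ring
      · rw [if_neg (by rw [Fin.ext_iff]; omega)]
        rw [show min (i:ℕ) (k:ℕ) = (k:ℕ) from by omega, show max (i:ℕ) (k:ℕ) = n - 1 from by omega,
          show min ((i:ℕ)-1) (k:ℕ) = (k:ℕ) from by omega,
          show max ((i:ℕ)-1) (k:ℕ) = n - 2 from by omega]
        rw [vv_eq c (le_refl _) (by omega), vv_eq c (by omega : n - 2 ≤ n - 1) (by omega)]
        rw [show ((n - 1 : ℕ) : ℝ) = (n:ℝ) - 1 from by rw [cast_sub' (by omega)]; norm_num,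
          show ((n - 2 : ℕ) : ℝ) = (n:ℝ) - 2 from by rw [cast_sub' (by omega)]; norm_num]
        field_simp
        ring
    · -- interior row
      rw [if_neg (by omega), dif_pos (by omega), dif_pos (by omega : (i:ℕ) + 1 < n)]
      rcases Nat.lt_trichotomy (k : ℕ) (i : ℕ) with hki | hki | hki
      · -- k < i
        rw [if_neg (by rw [Fin.ext_iff]; omega)]
        rw [show min (i:ℕ) (k:ℕ) = (k:ℕ) from by omega, show max (i:ℕ) (k:ℕ) = (i:ℕ) from by omega,
          show min ((i:ℕ)-1) (k:ℕ) = (k:ℕ) from by omega,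
          show max ((i:ℕ)-1) (k:ℕ) = (i:ℕ)-1 from by omega,
          show min ((i:ℕ)+1) (k:ℕ) = (k:ℕ) from by omega,
          show max ((i:ℕ)+1) (k:ℕ) = (i:ℕ)+1 from by omega]
        rw [vv_eq c (by omega) (by omega), vv_eq c (by omega : (i:ℕ) - 1 ≤ n - 1) (by omega),
          vv_eq c (by omega : (i:ℕ) + 1 ≤ n - 1) (by omega)]
        rw [show (((i:ℕ) - 1 : ℕ) : ℝ) = ((i:ℕ) : ℝ) - 1 from by rw [cast_sub' (by omega)]; norm_num]
        push_cast
        field_simp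
        ring
      · -- k = i
        rw [if_pos (by rw [Fin.ext_iff]; omega)]
        rw [show min (i:ℕ) (k:ℕ) = (i:ℕ) from by omega, show max (i:ℕ) (k:ℕ) = (i:ℕ) from by omega,
          show min ((i:ℕ)-1) (k:ℕ) = (i:ℕ)-1 from by omega,
          show max ((i:ℕ)-1) (k:ℕ) = (i:ℕ) from by omega,
          show min ((i:ℕ)+1) (k:ℕ) = (i:ℕ) from by omega,
          show max ((i:ℕ)+1) (k:ℕ) = (i:ℕ)+1 from by omega]
        rw [vv_eq c (by omega) (by omega), vv_eq c (by omega : (i:ℕ) + 1 ≤ n - 1) (by omega)]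
        simp only [uu]
        rw [show (((i:ℕ) - 1 : ℕ) : ℝ) = ((i:ℕ) : ℝ) - 1 from by rw [cast_sub' (by omega)]; norm_num]
        push_cast
        field_simp
        ring
      · -- i < k
        rw [if_neg (by rw [Fin.ext_iff]; omega)]
        rw [show min (i:ℕ) (k:ℕ) = (i:ℕ) from by omega, show max (i:ℕ) (k:ℕ) = (k:ℕ) from by omega,
          show min ((i:ℕ)-1) (k:ℕ) = (i:ℕ)-1 from by omega,
          show max ((i:ℕ)-1) (k:ℕ) = (k:ℕ) from by omega,
          show min ((i:ℕ)+1) (k:ℕ) = (i:ℕ)+1 from by omega,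
          show max ((i:ℕ)+1) (k:ℕ) = (k:ℕ) from by omega]
        simp only [uu]
        rw [show (((i:ℕ) - 1 : ℕ) : ℝ) = ((i:ℕ) : ℝ) - 1 from by rw [cast_sub' (by omega)]; norm_num]
        push_cast
        field_simp
        ring

theorem stmt9 (n : ℕ) (hn : 3 < n) (bt : ℝ) (hbt : bt < 0) :
    IsUnit (Ttilde n 2 bt) ∧
    ∀ i j : Fin n,
      Real.sign ((Ttilde n 2 bt)⁻¹ i j) =
        if (1 ≤ (i : ℕ) ∧ (i : ℕ) ≤ n - 2 ∧ 1 ≤ (j : ℕ) ∧ (j : ℕ) ≤ n - 2)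
            ∨ ((i : ℕ) = 0 ∧ (j : ℕ) = n - 1) ∨ ((i : ℕ) = n - 1 ∧ (j : ℕ) = 0)
        then 1 else -1 := by
  have hAB : Ttilde n 2 bt * Bmat n (bt - 1) = 1 := Tt_mul_eq_one hn hbt
  have hBA : Bmat n (bt - 1) * Ttilde n 2 bt = 1 := mul_eq_one_comm.mp hAB
  have hUnit : IsUnit (Ttilde n 2 bt) := ⟨⟨_, _, hAB, hBA⟩, rfl⟩
  have hInv : (Ttilde n 2 bt)⁻¹ = Bmat n (bt - 1) := Matrix.inv_eq_right_inv hAB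
  refine ⟨hUnit, ?_⟩
  intro i j
  rw [hInv]
  set c := bt - 1 with hc
  have hθ : (0:ℝ) < c * (2 + c * ((n : ℝ) - 1)) := theta_pos hn hbt
  have hc1 : c < -1 := by rw [hc]; linarith
  have hin : (i : ℕ) < n := i.isLt
  have hjn : (j : ℕ) < n := j.isLt
  simp only [Bmat, Matrix.of_apply]
  set m := min (i : ℕ) (j : ℕ) with hm
  set M := max (i : ℕ) (j : ℕ) with hM
  have hMn : M < n := by omega
  have hu0 : uu c 0 = 1 := by simp [uu]
  have huneg : ∀ k : ℕ, 1 ≤ k → uu c k < 0 := by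
    intro k hk
    have hk' : (1:ℝ) ≤ (k:ℝ) := by exact_mod_cast hk
    have h1 : c * k < -1 * k := mul_lt_mul_of_pos_right hc1 (by linarith)
    unfold uu
    nlinarith
  have hvv : ∀ k : ℕ, vv n c k = uu c (n - 1 - k) := fun _ => rfl
  have hv1 : vv n c (n - 1) = 1 := by rw [hvv, Nat.sub_self, hu0]
  by_cases hm0 : m = 0
  · by_cases hM1 : M = n - 1
    · rw [hm0, hM1, hu0, hv1]
      rw [Real.sign_of_pos (by positivity), if_pos (by omega)]
    · have hM2 : M ≤ n - 2 := by omega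
      have hv : vv n c M < 0 := by rw [hvv]; exact huneg _ (by omega)
      rw [hm0, hu0]
      rw [Real.sign_of_neg (div_neg_of_neg_of_pos (by nlinarith) hθ), if_neg (by omega)]
  · have hm1 : 1 ≤ m := by omega
    have hu : uu c m < 0 := huneg _ hm1
    by_cases hM1 : M = n - 1
    · rw [hM1, hv1]
      rw [Real.sign_of_neg (div_neg_of_neg_of_pos (by nlinarith) hθ), if_neg (by omega)]
    · have hM2 : M ≤ n - 2 := by omega
      have hv : vv n c M < 0 := by rw [hvv]; exact huneg _ (by omega)
      rw [Real.sign_of_pos (div_pos (mul_pos_of_neg_of_neg hu hv) hθ), if_pos (by omega)]
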